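/- Let c1, c2, g, H > 0. The function η̃(z) = (γ₀/(H² + z)) / (c1 + c2/(g²z))^(1/4), z > 0, attains its maximum at z* = (3c2/(8c1g²))·(√(1 + 16H²c1g²/(9c2)) − 1), i.e., z* is a critical point of η̃ and maximizes it on (0, ∞). -/

import Mathlib

open Real

private lemma stmt_8_deriv (c1 c2 g H γ₀ s : ℝ) (hc1 : 0 < c1) (hc2 : 0 < c2) (hg : 0 < g)
    (hH : 0 < H) (hγ : 0 < γ₀) (hs : 0 < s)
    (hkey : 4*(c1*g^2)*s^2 + 3*c2*s = c2*H^2) (hc : 0 < c1 + c2/(g^2*s)) :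
    HasDerivAt (fun z : ℝ => (γ₀ / (H ^ 2 + z)) / (c1 + c2 / (g ^ 2 * z)) ^ ((1:ℝ)/4)) 0 s := by
  have hden1 : 0 < H^2 + s := by positivity
  have hgs : 0 < g^2*s := by positivity
  have h1 : HasDerivAt (fun z:ℝ => H^2 + z) 1 s := (hasDerivAt_id s).const_add _
  have h2 : HasDerivAt (fun z:ℝ => γ₀/(H^2+z))
      ((0*(H^2+s) - γ₀*1)/(H^2+s)^2) s :=
    (hasDerivAt_const s γ₀).div h1 (ne_of_gt hden1)
  have h3 : HasDerivAt (fun z:ℝ => g^2*z) (g^2) s := by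
    simpa using (hasDerivAt_id s).const_mul (g^2)
  have h4 : HasDerivAt (fun z:ℝ => c1 + c2/(g^2*z))
      ((0*(g^2*s) - c2*g^2)/(g^2*s)^2) s :=
    ((hasDerivAt_const s c2).div h3 (ne_of_gt hgs)).const_add c1
  have h5 : HasDerivAt (fun z:ℝ => (c1 + c2/(g^2*z)) ^ ((1:ℝ)/4))
      ((0*(g^2*s) - c2*g^2)/(g^2*s)^2 * ((1:ℝ)/4) * (c1 + c2/(g^2*s)) ^ ((1:ℝ)/4 - 1)) s :=
    h4.rpow_const (Or.inl hc.ne')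
  have h6 := h2.div h5 (ne_of_gt (Real.rpow_pos_of_pos hc _))
  refine h6.congr_deriv ?_
  symm
  have hcpow : (c1 + c2/(g^2*s)) ^ ((1:ℝ)/4 - 1)
      = (c1 + c2/(g^2*s)) ^ ((1:ℝ)/4) / (c1 + c2/(g^2*s)) := by
    rw [Real.rpow_sub hc, Real.rpow_one]
  rw [hcpow]
  set X := (c1 + c2/(g^2*s)) ^ ((1:ℝ)/4) with hXdef
  have hX : (0:ℝ) < X := Real.rpow_pos_of_pos hc _
  field_simp
  linear_combination γ₀ * hkey

private lemma stmt_8_max (c1 c2 g H γ₀ s z : ℝ) (hc1 : 0 < c1) (hc2 : 0 < c2)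
    (hg : 0 < g) (hH : 0 < H) (hγ : 0 < γ₀) (hs : 0 < s) (hz : 0 < z)
    (hkey : 4*(c1*g^2)*s^2 + 3*c2*s = c2*H^2) :
    (γ₀ / (H ^ 2 + z)) / (c1 + c2 / (g ^ 2 * z)) ^ ((1:ℝ)/4)
      ≤ (γ₀ / (H ^ 2 + s)) / (c1 + c2 / (g ^ 2 * s)) ^ ((1:ℝ)/4) := by
  have hc : 0 < c1 + c2/(g^2*s) := by positivity
  have hcz : 0 < c1 + c2/(g^2*z) := by positivity
  have hds : 0 < H^2 + s := by positivity
  have hdz : 0 < H^2 + z := by positivity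
  have hQ : (H^2+s)^4*(c1 + c2/(g^2*s)) ≤ (H^2+z)^4*(c1 + c2/(g^2*z)) := by
    have hsub : H^2 = (4*c1*g^2*s^2+3*c2*s)/c2 := by
      field_simp; linarith [hkey]
    have h1 : 256*(s*(c1*g^2*s+c2))^3*(c1*g^2*s^2+c2*z)
        ≤ (4*(c1*g^2)*s^2+3*c2*s+c2*z)^4 := by
      nlinarith [mul_nonneg (sq_nonneg ((c1*g^2*s^2+c2*z)-(s*(c1*g^2*s+c2))))
        (show (0:ℝ) ≤ (c1*g^2*s^2+c2*z)^2+14*(s*(c1*g^2*s+c2))*(c1*g^2*s^2+c2*z)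
          +81*(s*(c1*g^2*s+c2))^2 by positivity)]
    have h2 : z*(c1*g^2*s+c2)^2 ≤ (c1*g^2*s^2+c2*z)*(c1*g^2*z+c2) := by
      nlinarith [mul_nonneg (mul_nonneg (mul_pos hc1 (pow_pos hg 2)).le hc2.le)
        (sq_nonneg (s-z))]
    have h3 : 256*(s*(c1*g^2*s+c2))^3*(c1*g^2*s^2+c2*z)*(c1*g^2*z+c2)
        ≤ (4*(c1*g^2)*s^2+3*c2*s+c2*z)^4*(c1*g^2*z+c2) :=
      mul_le_mul_of_nonneg_right h1 (by positivity)
    have h4 : 256*(s*(c1*g^2*s+c2))^3*(z*(c1*g^2*s+c2)^2)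
        ≤ 256*(s*(c1*g^2*s+c2))^3*((c1*g^2*s^2+c2*z)*(c1*g^2*z+c2)) :=
      mul_le_mul_of_nonneg_left h2 (by positivity)
    have h5 : 256*(s*(c1*g^2*s+c2))^3*(z*(c1*g^2*s+c2)^2)
        ≤ (4*(c1*g^2)*s^2+3*c2*s+c2*z)^4*(c1*g^2*z+c2) := by linarith
    rw [hsub]
    field_simp [hs.ne', hz.ne', hc2.ne']
    nlinarith [mul_le_mul_of_nonneg_left h5 (show (0:ℝ) ≤ g^2*s*c2^4 by positivity)]
  have hXs : 0 < (c1 + c2/(g^2*s)) ^ ((1:ℝ)/4) := Real.rpow_pos_of_pos hc _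
  have hXz : 0 < (c1 + c2/(g^2*z)) ^ ((1:ℝ)/4) := Real.rpow_pos_of_pos hcz _
  have hps : ((c1 + c2/(g^2*s)) ^ ((1:ℝ)/4))^(4:ℕ) = c1 + c2/(g^2*s) := by
    rw [← Real.rpow_natCast ((c1 + c2/(g^2*s)) ^ ((1:ℝ)/4)) 4, ← Real.rpow_mul hc.le]
    norm_num
  have hpz : ((c1 + c2/(g^2*z)) ^ ((1:ℝ)/4))^(4:ℕ) = c1 + c2/(g^2*z) := by
    rw [← Real.rpow_natCast ((c1 + c2/(g^2*z)) ^ ((1:ℝ)/4)) 4, ← Real.rpow_mul hcz.le]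
    norm_num
  have hB : (H^2+s) * (c1 + c2/(g^2*s)) ^ ((1:ℝ)/4)
      ≤ (H^2+z) * (c1 + c2/(g^2*z)) ^ ((1:ℝ)/4) := by
    refine le_of_pow_le_pow_left₀ (n := 4) (by norm_num) (by positivity) ?_
    rw [mul_pow, mul_pow, hps, hpz]
    exact hQ
  rw [div_div, div_div]
  gcongr

theorem stmt_8 (c1 c2 g H γ₀ : ℝ) (hc1 : 0 < c1) (hc2 : 0 < c2) (hg : 0 < g)
    (hH : 0 < H) (hγ : 0 < γ₀) :
    HasDerivAt (fun z : ℝ => (γ₀ / (H ^ 2 + z)) / (c1 + c2 / (g ^ 2 * z)) ^ ((1:ℝ)/4)) 0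
        ((3 * c2 / (8 * c1 * g ^ 2))
          * (Real.sqrt (1 + 16 * H ^ 2 * c1 * g ^ 2 / (9 * c2)) - 1)) ∧
    ∀ z > (0:ℝ),
      (γ₀ / (H ^ 2 + z)) / (c1 + c2 / (g ^ 2 * z)) ^ ((1:ℝ)/4)
        ≤ (γ₀ / (H ^ 2 + ((3 * c2 / (8 * c1 * g ^ 2))
              * (Real.sqrt (1 + 16 * H ^ 2 * c1 * g ^ 2 / (9 * c2)) - 1))))
          / (c1 + c2 / (g ^ 2 * ((3 * c2 / (8 * c1 * g ^ 2))
              * (Real.sqrt (1 + 16 * H ^ 2 * c1 * g ^ 2 / (9 * c2)) - 1)))) ^ ((1:ℝ)/4) := by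
  set K := Real.sqrt (1 + 16 * H ^ 2 * c1 * g ^ 2 / (9 * c2)) with hKdef
  have hK2 : K^2 = 1 + 16 * H ^ 2 * c1 * g ^ 2 / (9 * c2) := Real.sq_sqrt (by positivity)
  have hKpos : 0 ≤ K := Real.sqrt_nonneg _
  have harg : (1:ℝ) < 1 + 16 * H ^ 2 * c1 * g ^ 2 / (9 * c2) := by
    have : 0 < 16 * H ^ 2 * c1 * g ^ 2 / (9 * c2) := by positivity
    linarith
  have hK1 : 1 < K := by nlinarith [hK2, hKpos]
  have hs : 0 < (3 * c2 / (8 * c1 * g ^ 2)) * (K - 1) :=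
    mul_pos (by positivity) (by linarith)
  have hkey : 4*(c1*g^2)*((3 * c2 / (8 * c1 * g ^ 2)) * (K - 1))^2
      + 3*c2*((3 * c2 / (8 * c1 * g ^ 2)) * (K - 1)) = c2*H^2 := by
    have hK2' : K^2*(9*c2) = 9*c2 + 16*H^2*c1*g^2 := by
      rw [hK2]; field_simp
    field_simp
    linear_combination 4 * hK2'
  have hc : 0 < c1 + c2/(g^2*((3 * c2 / (8 * c1 * g ^ 2)) * (K - 1))) := by positivity
  exact ⟨stmt_8_deriv c1 c2 g H γ₀ _ hc1 hc2 hg hH hγ hs hkey hc,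
    fun z hz => stmt_8_max c1 c2 g H γ₀ _ z hc1 hc2 hg hH hγ hs hz hkey⟩
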